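/- Define f_T(X) = X and f_{t-1}(X) = f_t(X) - n_t·f_t'(X)·g(X) where g is a polynomial, and define g_1 = g, g_{k+1} = -g_k'·g. Then f_t(X) = X - ∑_{k=1}^{T-t} S_k(n_{t+1},...,n_T)·g_k(X), where S_k denotes the k-th elementary symmetric polynomial. -/

import Mathlib

lemma my_esymm_cons {R : Type*} [CommSemiring R] (a : R) (s : Multiset R) (k : ℕ) :
    (a ::ₘ s).esymm (k + 1) = s.esymm (k + 1) + a * s.esymm k := by
  simp only [Multiset.esymm, Multiset.powersetCard_cons, Multiset.map_add, Multiset.sum_add,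
    Multiset.map_map, Function.comp_def, Multiset.prod_cons]
  rw [← Multiset.sum_map_mul_left]

lemma my_esymm_zero {R : Type*} [CommSemiring R] (s : Multiset R) : s.esymm 0 = 1 := by
  simp [Multiset.esymm]

lemma my_esymm_eq_zero {R : Type*} [CommSemiring R] (s : Multiset R) (k : ℕ)
    (h : Multiset.card s < k) : s.esymm k = 0 := by
  simp [Multiset.esymm, Multiset.powersetCard_eq_empty _ h]

lemma my_sum_Icc {M : Type*} [AddCommMonoid M] (N : ℕ) (F : ℕ → M) :
    ∑ k ∈ Finset.Icc 1 N, F k = ∑ j ∈ Finset.range N, F (j + 1) := by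
  induction N with
  | zero => simp
  | succ N ih =>
    have hins : Finset.Icc 1 (N + 1) = insert (N + 1) (Finset.Icc 1 N) := by
      ext k; simp only [Finset.mem_Icc, Finset.mem_insert]; omega
    rw [hins, Finset.sum_insert (by simp), Finset.sum_range_succ, ih]
    exact add_comm _ _

open Polynomial in
/-- With `f_T = X`, `f_{t-1} = f_t - n_t·f_t'·g` for a polynomial `g`, and
`g₁ = g`, `g_{k+1} = -g_k'·g`, each `f_t` satisfies
`f_t = X - ∑_{k=1}^{T-t} S_k(n_{t+1},…,n_T)·g_k`, where `S_k` is the `k`-th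
elementary symmetric polynomial. -/
theorem stmt_9 (T : ℕ) (n : ℕ → ℝ) (hn : ∀ t, 1 ≤ t → t ≤ T → 0 < n t)
    (g : Polynomial ℝ) (f gk : ℕ → Polynomial ℝ)
    (hT : f T = X)
    (hfrec : ∀ t, 1 ≤ t → t ≤ T →
      f (t-1) = f t - C (n t) * derivative (f t) * g)
    (hg1 : gk 1 = g)
    (hgrec : ∀ k, 1 ≤ k → gk (k+1) = -derivative (gk k) * g)
    (t : ℕ) (ht : t ≤ T) :
    f t = X - ∑ k ∈ Finset.Icc 1 (T - t),
      C (((Finset.Icc (t+1) T).val.map n).esymm k) * gk k := by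
  suffices h : ∀ d t, t ≤ T → T - t = d → f t = X - ∑ k ∈ Finset.Icc 1 (T - t),
      C (((Finset.Icc (t+1) T).val.map n).esymm k) * gk k from h (T - t) t ht rfl
  intro d
  induction d with
  | zero =>
    intro t ht h0
    have : t = T := by omega
    subst this
    simp [hT]
  | succ d ih =>
    intro t ht hd
    have ht1 : t + 1 ≤ T := by omega
    have hd' : T - (t + 1) = d := by omega
    have hstep := hfrec (t + 1) (by omega) ht1
    simp only [Nat.add_sub_cancel] at hstep
    have hft1 := ih (t + 1) ht1 hd'
    rw [hd'] at hft1
    -- the multiset splits as n (t+1) ::ₘ rest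
    set s : Multiset ℝ := (Finset.Icc (t + 2) T).val.map n with hs
    set m : ℝ := n (t + 1) with hm
    have hsplit : (Finset.Icc (t + 1) T).val.map n = m ::ₘ s := by
      have h1 : Finset.Icc (t + 1) T = insert (t + 1) (Finset.Ioc (t + 1) T) :=
        (Finset.Ioc_insert_left ht1).symm
      have h2 : Finset.Ioc (t + 1) T = Finset.Icc (t + 2) T := (Finset.Icc_add_one_left_eq_Ioc _ _).symm
      rw [h1, h2, Finset.insert_val_of_notMem (by simp), Multiset.map_cons]
    have hcards : Multiset.card s = d := by
      rw [hs, Multiset.card_map]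
      simp only [Finset.card_val, Nat.card_Icc]
      omega
    rw [hd, hsplit]
    set e : ℕ → ℝ := fun k => s.esymm k with he
    -- rewrite the target sum
    rw [my_sum_Icc]
    have hEsymm : ∀ j ∈ Finset.range (d + 1),
        C ((m ::ₘ s).esymm (j + 1)) * gk (j + 1)
          = C (e (j + 1)) * gk (j + 1) + C m * (C (e j) * gk (j + 1)) := by
      intro j _
      rw [he]; rw [my_esymm_cons, map_add, map_mul, add_mul]
      ring
    rw [Finset.sum_congr rfl hEsymm, Finset.sum_add_distrib, ← Finset.mul_sum]
    have hzero : e (d + 1) = 0 := my_esymm_eq_zero s (d + 1) (by omega)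
    rw [Finset.sum_range_succ (fun j => C (e (j + 1)) * gk (j + 1)), hzero, map_zero, zero_mul,
      add_zero]
    rw [Finset.sum_range_succ' (fun j => C (e j) * gk (j + 1)),
      show e 0 = 1 from my_esymm_zero s, map_one, one_mul, hg1]
    have hgkrw : ∀ j ∈ Finset.range d,
        C (e (j + 1)) * gk (j + 1 + 1)
          = (C (e (j + 1)) * derivative (gk (j + 1))) * (-g) := by
      intro j _
      rw [hgrec (j + 1) (by omega)]
      ring
    rw [Finset.sum_congr rfl hgkrw, ← Finset.sum_mul]
    -- now the left side
    rw [hstep, hft1, my_sum_Icc]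
    rw [derivative_sub, derivative_X]
    rw [map_sum derivative (fun j => C (e (j + 1)) * gk (j + 1)) (Finset.range d)]
    have hder : ∀ j ∈ Finset.range d,
        derivative (C (e (j + 1)) * gk (j + 1)) = C (e (j + 1)) * derivative (gk (j + 1)) := by
      intro j _
      rw [derivative_C_mul]
    rw [Finset.sum_congr rfl hder]
    ring
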